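/- Let α ≥ 1/2 and R₀ as above. Then R₀(z_a, z_b) > -1/α for all z_a, z_b < 0. -/

import Mathlib

theorem stmt_15 (α : ℝ) (hα : 1 / 2 ≤ α) :
    ∀ za zb : ℝ, za < 0 → zb < 0 →
      -1 / α <
        (2 - (za + zb) * (za / (1 - α * za) + zb / (1 - α * zb))) /
          (2 * (1 - (za + zb))) := by
  intro za zb ha hb
  have hα0 : (0:ℝ) < α := lt_of_lt_of_le (by norm_num) hα
  have hu : (0:ℝ) < 1 - α * za := by nlinarith
  have hv : (0:ℝ) < 1 - α * zb := by nlinarith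
  have hw : (0:ℝ) < 2 * (1 - (za + zb)) := by linarith
  rw [div_lt_div_iff₀ hα0 hw]
  have hab : (0:ℝ) < za * zb := mul_pos_of_neg_of_neg ha hb
  have key : -1 * (2 * (1 - (za + zb))) * ((1 - α * za) * (1 - α * zb)) <
      (2 - (za + zb) * (za / (1 - α * za) + zb / (1 - α * zb))) * α *
        ((1 - α * za) * (1 - α * zb)) := by
    have e : (2 - (za + zb) * (za / (1 - α * za) + zb / (1 - α * zb))) * α *
        ((1 - α * za) * (1 - α * zb)) =
        (2 * (1 - α * za) * (1 - α * zb)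
          - (za + zb) * (za * (1 - α * zb) + zb * (1 - α * za))) * α := by
      have h1 : za / (1 - α * za) * (1 - α * za) = za := div_mul_cancel₀ _ hu.ne'
      have h2 : zb / (1 - α * zb) * (1 - α * zb) = zb := div_mul_cancel₀ _ hv.ne'
      linear_combination (-α * (za + zb) * (1 - α * zb)) * h1 + (-α * (za + zb) * (1 - α * za)) * h2
    rw [e]
    nlinarith [sq_nonneg (za + zb), mul_pos hα0 hab, mul_pos (mul_pos hα0 hα0) hab,
      mul_pos (mul_pos (mul_pos hα0 hα0) hα0) hab,
      mul_pos (mul_pos hα0 hα0) (neg_pos.mpr ha), mul_pos (mul_pos hα0 hα0) (neg_pos.mpr hb),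
      mul_nonneg hα0.le (sq_nonneg (za + zb))]
  exact lt_of_mul_lt_mul_right key (mul_pos hu hv).le
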